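/- Let M ⊆ ℝ^N be a set such that for every admissible array (k; s; i₁,…,i_s) (0 < k < N, s ≥ 1, all i_j ≥ 2, ∑(i_j−1) ≥ k+1) no tuple of pairwise distinct points of M has its difference vectors spanning a subspace of dimension ≤ k. Then for every linear subspace H with 0 < dim H = κ < N, the non-degenerate fibers F₁,…,F_σ of the orthogonal projection p_H restricted to M satisfy ∑_{j=1}^σ (|F_j| − 1) ≤ κ. -/

import Mathlib

noncomputable def projFiber {N : ℕ} (H : Submodule ℝ (EuclideanSpace ℝ (Fin N)))
    (M : Set (EuclideanSpace ℝ (Fin N))) (A : EuclideanSpace ℝ (Fin N)) :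
    Set (EuclideanSpace ℝ (Fin N)) :=
  {B ∈ M | Hᗮ.orthogonalProjectionOnto B = Hᗮ.orthogonalProjectionOnto A}

lemma projFiber_subset {N : ℕ} (H : Submodule ℝ (EuclideanSpace ℝ (Fin N)))
    (M : Set (EuclideanSpace ℝ (Fin N))) (A : EuclideanSpace ℝ (Fin N)) :
    projFiber H M A ⊆ M := fun _ h => h.1

lemma core {N : ℕ} (M : Set (EuclideanSpace ℝ (Fin N)))
    (hyp : ∀ (k s : ℕ) (i : Fin s → ℕ), ∀ (_ : 0 < k) (_ : k < N) (_ : 1 ≤ s)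
      (hi : ∀ j, 2 ≤ i j) (_ : k + 1 ≤ ∑ j, (i j - 1)),
      ¬ ∃ A : (j : Fin s) → Fin (i j) → EuclideanSpace ℝ (Fin N),
        (∀ j m, A j m ∈ M) ∧
        Function.Injective (fun p : Σ j : Fin s, Fin (i j) => A p.1 p.2) ∧
        Module.finrank ℝ (Submodule.span ℝ
          {v | ∃ (j : Fin s) (m : Fin (i j)), m ≠ (⟨0, Nat.lt_of_lt_of_le (by norm_num) (hi j)⟩ : Fin (i j)) ∧
            v = A j m - A j ⟨0, Nat.lt_of_lt_of_le (by norm_num) (hi j)⟩}) ≤ k)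
    (H : Submodule ℝ (EuclideanSpace ℝ (Fin N))) (κ : ℕ)
    (hκ : Module.finrank ℝ H = κ) (hκ0 : 0 < κ) (hκN : κ < N)
    (s : ℕ) (hs : 1 ≤ s)
    (A : Fin s → EuclideanSpace ℝ (Fin N))
    (t : Fin s → Finset (EuclideanSpace ℝ (Fin N)))
    (hsub : ∀ j, ↑(t j) ⊆ projFiber H M (A j))
    (hcard : ∀ j, 2 ≤ (t j).card)
    (hproj : ∀ j j', j ≠ j' →
      Hᗮ.orthogonalProjectionOnto (A j) ≠ Hᗮ.orthogonalProjectionOnto (A j'))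
    (hsum : κ + 1 ≤ ∑ j, ((t j).card - 1)) : False := by
  set B : (j : Fin s) → Fin ((t j).card) → EuclideanSpace ℝ (Fin N) :=
    fun j m => ((t j).equivFin.symm m : EuclideanSpace ℝ (Fin N)) with hB
  have hmem : ∀ j m, B j m ∈ projFiber H M (A j) := fun j m =>
    hsub j ((t j).equivFin.symm m).2
  refine hyp κ s (fun j => (t j).card) hκ0 hκN hs hcard hsum ⟨B, ?_, ?_, ?_⟩
  · exact fun j m => (hmem j m).1
  · rintro ⟨j, m⟩ ⟨j', m'⟩ h
    simp only at h
    rcases eq_or_ne j j' with rfl | hne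
    · have : m = m' := (t j).equivFin.symm.injective (Subtype.ext h)
      simp [this]
    · exact absurd (((hmem j m).2.symm.trans (h ▸ (hmem j' m').2))) (hproj j j' hne)
  · rw [← hκ]
    apply Submodule.finrank_mono
    rw [Submodule.span_le]
    rintro v ⟨j, m, hm, rfl⟩
    have h1 := (hmem j m).2
    have h2 := (hmem j ⟨0, by have := hcard j; omega⟩).2
    have : Hᗮ.orthogonalProjectionOnto (B j m - B j ⟨0, by have := hcard j; omega⟩) = 0 := by
      rw [map_sub, h1, h2, sub_self]
    rwa [Submodule.orthogonalProjectionOnto_eq_zero_iff, Submodule.orthogonal_orthogonal] at this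

theorem stmt19 (N : ℕ) (M : Set (EuclideanSpace ℝ (Fin N)))
    (hyp : ∀ (k s : ℕ) (i : Fin s → ℕ), ∀ (_ : 0 < k) (_ : k < N) (_ : 1 ≤ s)
      (hi : ∀ j, 2 ≤ i j) (_ : k + 1 ≤ ∑ j, (i j - 1)),
      ¬ ∃ A : (j : Fin s) → Fin (i j) → EuclideanSpace ℝ (Fin N),
        (∀ j m, A j m ∈ M) ∧
        Function.Injective (fun p : Σ j : Fin s, Fin (i j) => A p.1 p.2) ∧
        Module.finrank ℝ (Submodule.span ℝ
          {v | ∃ (j : Fin s) (m : Fin (i j)), m ≠ (⟨0, by have := hi j; omega⟩ : Fin (i j)) ∧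
            v = A j m - A j ⟨0, by have := hi j; omega⟩}) ≤ k) :
    ∀ (H : Submodule ℝ (EuclideanSpace ℝ (Fin N))) (κ : ℕ),
      Module.finrank ℝ H = κ → 0 < κ → κ < N →
      {F : Set (EuclideanSpace ℝ (Fin N)) | ∃ A ∈ M, F = projFiber H M A ∧ F.Nontrivial}.Finite ∧
      ∀ 𝒮 : Finset (Set (EuclideanSpace ℝ (Fin N))),
        (∀ F ∈ 𝒮, ∃ A ∈ M, F = projFiber H M A ∧ F.Nontrivial) →
        ∑ F ∈ 𝒮, (F.ncard - 1) ≤ κ := by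
  intro H κ hκ hκ0 hκN
  -- every fiber is finite
  have hfin : ∀ A : EuclideanSpace ℝ (Fin N), (projFiber H M A).Finite := by
    intro A
    by_contra hinf'
    have hinf : (projFiber H M A).Infinite := hinf'
    obtain ⟨u, hu, hcard⟩ := hinf.exists_subset_card_eq (κ + 2)
    refine core M hyp H κ hκ hκ0 hκN 1 le_rfl (fun _ => A) (fun _ => u) ?_ ?_ ?_ ?_
    · intro j; exact hu
    · intro j; show 2 ≤ u.card; omega
    · intro j j' h; exact absurd (Subsingleton.elim j j') h
    · simp [hcard]
  -- the sum bound
  have key : ∀ 𝒮 : Finset (Set (EuclideanSpace ℝ (Fin N))),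
      (∀ F ∈ 𝒮, ∃ A ∈ M, F = projFiber H M A ∧ F.Nontrivial) →
      ∑ F ∈ 𝒮, (F.ncard - 1) ≤ κ := by
    intro 𝒮 h𝒮
    by_contra hgt
    push_neg at hgt
    set 𝒮' : Finset (Set (EuclideanSpace ℝ (Fin N))) :=
      𝒮.filter (fun F => 2 ≤ F.ncard) with h𝒮'
    have hsum' : ∑ F ∈ 𝒮', (F.ncard - 1) = ∑ F ∈ 𝒮, (F.ncard - 1) := by
      apply Finset.sum_filter_of_ne
      intro F _ h
      omega
    -- choose representative points
    have hrep : ∀ F ∈ 𝒮', ∃ A, F = projFiber H M A := by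
      intro F hF
      obtain ⟨A, _, hFA, _⟩ := h𝒮 F (Finset.mem_filter.mp hF).1
      exact ⟨A, hFA⟩
    set s := 𝒮'.card with hs
    have hs1 : 1 ≤ s := by
      rcases Finset.eq_empty_or_nonempty 𝒮' with he | hne
      · rw [he] at hsum'; simp at hsum'; omega
      · exact Finset.card_pos.mpr hne
    set φ : Fin s ≃ 𝒮' := 𝒮'.equivFin.symm with hφ
    have hA : ∀ j : Fin s, ∃ A, (φ j : Set (EuclideanSpace ℝ (Fin N))) = projFiber H M A :=
      fun j => hrep _ (φ j).2
    choose A hAf using hA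
    have hFf : ∀ j : Fin s, ((φ j : Set (EuclideanSpace ℝ (Fin N)))).Finite := by
      intro j
      rw [hAf j]
      exact hfin (A j)
    set t : Fin s → Finset (EuclideanSpace ℝ (Fin N)) :=
      fun j => (hFf j).toFinset with ht
    have htcard : ∀ j, (t j).card = (φ j : Set (EuclideanSpace ℝ (Fin N))).ncard := by
      intro j
      rw [ht]
      exact (Set.ncard_eq_toFinset_card _ (hFf j)).symm
    refine core M hyp H κ hκ hκ0 hκN s hs1 A t ?_ ?_ ?_ ?_
    · intro j
      rw [ht]
      simp only [Set.Finite.coe_toFinset]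
      rw [hAf j]
    · intro j
      rw [htcard j]
      exact (Finset.mem_filter.mp (φ j).2).2
    · intro j j' hne heq
      apply hne
      have hsets : projFiber H M (A j) = projFiber H M (A j') := by
        ext B
        simp only [projFiber, Set.mem_setOf_eq, heq]
      have : (φ j : Set (EuclideanSpace ℝ (Fin N))) = (φ j' : Set (EuclideanSpace ℝ (Fin N))) := by
        rw [hAf j, hAf j', hsets]
      exact φ.injective (Subtype.ext this)
    · have : ∑ j : Fin s, ((t j).card - 1)
          = ∑ F ∈ 𝒮', (F.ncard - 1) := by
        rw [← Finset.sum_coe_sort 𝒮' (fun F => F.ncard - 1)]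
        rw [← Equiv.sum_comp φ (fun x => ((x : Set (EuclideanSpace ℝ (Fin N))).ncard - 1))]
        exact Finset.sum_congr rfl (fun j _ => by rw [htcard j])
      rw [this, hsum']
      omega
  refine ⟨?_, key⟩
  -- finiteness of the set of nontrivial fibers
  by_contra hinf'
  have hinf : {F : Set (EuclideanSpace ℝ (Fin N)) | ∃ A ∈ M, F = projFiber H M A ∧ F.Nontrivial}.Infinite := hinf'
  obtain ⟨u, hu, hcard⟩ := hinf.exists_subset_card_eq (κ + 1)
  have h𝒮 : ∀ F ∈ u, ∃ A ∈ M, F = projFiber H M A ∧ F.Nontrivial := fun F hF => hu hF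
  have hle := key u h𝒮
  have : ∀ F ∈ u, 1 ≤ F.ncard - 1 := by
    intro F hF
    obtain ⟨A, _, hFA, hnt⟩ := h𝒮 F hF
    have hFfin : F.Finite := hFA ▸ hfin A
    have : 1 < F.ncard := (Set.one_lt_ncard hFfin).mpr
      (by obtain ⟨a, ha, b, hb, hab⟩ := hnt; exact ⟨a, ha, b, hb, hab⟩)
    omega
  have : κ + 1 ≤ ∑ F ∈ u, (F.ncard - 1) := by
    calc κ + 1 = ∑ _F ∈ u, 1 := by rw [Finset.sum_const, hcard, smul_eq_mul, mul_one]
    _ ≤ _ := Finset.sum_le_sum this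
  omega
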